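/- Let p and q be positive integers and let π be a partition of [p+q] belonging to NC_ann(p,q) which has at least two (p,q)-connecting blocks. Then there exists a unique permutation τ ∈ S_ann-nc(p,q) whose partition into orbits equals π. -/

import Mathlib

/-- The permutation induced by `f` on the subset `B`: an element `b` is sent to the first
element of the sequence `f b, f (f b), f (f (f b)), ...` that lies in `B`
(and is left fixed if no iterate ever returns to `B`). -/
noncomputable def induced {α : Type*} (f : α → α) (B : Set α) (b : α) : α := by
  classical
  exact if h : ∃ k, 0 < k ∧ f^[k] b ∈ B then f^[Nat.find h] b else b

/-- `A` is an orbit of the permutation `τ`. -/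
def IsOrbit {α : Type*} (τ : Equiv.Perm α) (A : Set α) : Prop :=
  ∃ a, A = {b | τ.SameCycle a b}

/-- The number of orbits of `τ` (fixed points count as orbits). -/
noncomputable def numOrbits {α : Type*} (τ : Equiv.Perm α) : ℕ :=
  Set.ncard {A : Set α | IsOrbit τ A}

/-- `induced f S` acts on `a, b, c` as the 3-cycle `(a, b, c)`. -/
def MapsCyc3 {α : Type*} (f : α → α) (S : Set α) (a b c : α) : Prop :=
  induced f S a = b ∧ induced f S b = c ∧ induced f S c = a

/-- `induced f S` acts on `a, b, c, d` as the 4-cycle `(a, b, c, d)`. -/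
def MapsCyc4 {α : Type*} (f : α → α) (S : Set α) (a b c d : α) : Prop :=
  induced f S a = b ∧ induced f S b = c ∧ induced f S c = d ∧ induced f S d = a

/-- `induced f S` acts on `a, b, c, d` as the product of transpositions `(a, c)(b, d)`. -/
def MapsSwap2 {α : Type*} (f : α → α) (S : Set α) (a b c d : α) : Prop :=
  induced f S a = c ∧ induced f S c = a ∧ induced f S b = d ∧ induced f S d = b

/-- `induced f S` acts on `x, y` as the transposition `(x, y)`. -/
def MapsSwap {α : Type*} (f : α → α) (S : Set α) (x y : α) : Prop :=
  induced f S x = y ∧ induced f S y = x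

/-- `σ` is standard with respect to the "forward cycle" `γ₀`, i.e. `σ∣B = γ₀∣B` for
every orbit `B` of `σ`. -/
def DiscStandardRel {n : ℕ} (γ₀ σ : Equiv.Perm (Fin n)) : Prop :=
  ∀ A : Set (Fin n), IsOrbit σ A → ∀ b ∈ A, induced (⇑σ) A b = induced (⇑γ₀) A b

/-- The orbit partition of `σ` has no crossing: there are no `a < b < c < d` with
`a, c` in one orbit and `b, d` in a different orbit. -/
def OrbitsNoCrossing {n : ℕ} (σ : Equiv.Perm (Fin n)) : Prop :=
  ¬ ∃ a b c d : Fin n, a < b ∧ b < c ∧ c < d ∧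
      σ.SameCycle a c ∧ σ.SameCycle b d ∧ ¬ σ.SameCycle a b

/-- Disc non-crossing relative to a given forward cycle `γ₀`. -/
def DiscNCRel {n : ℕ} (γ₀ σ : Equiv.Perm (Fin n)) : Prop :=
  DiscStandardRel γ₀ σ ∧ OrbitsNoCrossing σ

/-- The set `S_disc-nc(n)` of disc non-crossing permutations of `[n]`
(here `[n] = {1, …, n}` is modelled by `Fin n`, and the forward cycle
`γ₀ = (1, 2, …, n)` is `finRotate n`). -/
def DiscNC {n : ℕ} (σ : Equiv.Perm (Fin n)) : Prop :=
  DiscNCRel (finRotate n) σ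

/-- The external points `{1, …, p}` (0-indexed: values `< p`). -/
def extSet (p q : ℕ) : Set (Fin (p + q)) := {i | (i : ℕ) < p}

/-- The internal points `{p+1, …, p+q}` (0-indexed: values `≥ p`). -/
def intSet (p q : ℕ) : Set (Fin (p + q)) := {i | p ≤ (i : ℕ)}

/-- `γ_ext = (1, 2, …, p)`, the forward cycle on the external points. -/
def gammaExt (p q : ℕ) : Equiv.Perm (Fin (p + q)) :=
  ((List.finRange (p + q)).take p).formPerm

/-- `γ_int = (p+1, p+2, …, p+q)`, the forward cycle on the internal points. -/
def gammaInt (p q : ℕ) : Equiv.Perm (Fin (p + q)) :=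
  ((List.finRange (p + q)).drop p).formPerm

/-- `γ = γ_ext · γ_int`. -/
def gammaAnn (p q : ℕ) : Equiv.Perm (Fin (p + q)) := gammaExt p q * gammaInt p q

/-- `λ_{x,y}`: the permutation fixing `x` and `y` and cycling the remaining points as
`(γ_ext(x), γ_ext²(x), …, γ_ext^{p-1}(x), γ_int(y), γ_int²(y), …, γ_int^{q-1}(y))`. -/
def lamPerm (p q : ℕ) (x y : Fin (p + q)) : Equiv.Perm (Fin (p + q)) :=
  (((List.range (p - 1)).map fun k => (gammaExt p q ^ (k + 1)) x) ++
    ((List.range (q - 1)).map fun k => (gammaInt p q ^ (k + 1)) y)).formPerm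

/-- `τ` is standard in `(p,q)`-annular sense. -/
def AnnStandard (p q : ℕ) (τ : Equiv.Perm (Fin (p + q))) : Prop :=
  (∀ A : Set (Fin (p + q)), IsOrbit τ A →
    (∀ b ∈ A ∩ extSet p q,
        induced (⇑τ) (A ∩ extSet p q) b = induced (⇑(gammaExt p q)) (A ∩ extSet p q) b) ∧
    (∀ b ∈ A ∩ intSet p q,
        induced (⇑τ) (A ∩ intSet p q) b = induced (⇑(gammaInt p q)) (A ∩ intSet p q) b)) ∧
  (∀ A : Set (Fin (p + q)), IsOrbit τ A →
    (A ∩ extSet p q).Nonempty → (A ∩ intSet p q).Nonempty →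
    (∃! a, a ∈ A ∩ extSet p q ∧ τ a ∈ intSet p q) ∧
    (∃! a, a ∈ A ∩ intSet p q ∧ τ a ∈ extSet p q))

/-- The annular crossing pattern (AC-1). -/
def AC1 (p q : ℕ) (τ : Equiv.Perm (Fin (p + q))) : Prop :=
  ∃ a b c d : Fin (p + q), List.Pairwise (· ≠ ·) [a, b, c, d] ∧
    MapsCyc4 (⇑(gammaAnn p q)) {a, b, c, d} a b c d ∧
    MapsSwap2 (⇑τ) {a, b, c, d} a b c d

/-- The annular crossing pattern (AC-2). -/
def AC2 (p q : ℕ) (τ : Equiv.Perm (Fin (p + q))) : Prop :=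
  ∃ a b c x y : Fin (p + q), List.Pairwise (· ≠ ·) [a, b, c, x, y] ∧
    x ∈ extSet p q ∧ y ∈ intSet p q ∧
    MapsCyc3 (⇑(lamPerm p q x y)) {a, b, c} a b c ∧
    MapsCyc3 (⇑τ) {a, b, c, x, y} a c b ∧
    MapsSwap (⇑τ) {a, b, c, x, y} x y

/-- The annular crossing pattern (AC-3). -/
def AC3 (p q : ℕ) (τ : Equiv.Perm (Fin (p + q))) : Prop :=
  ∃ a b c d x y : Fin (p + q), List.Pairwise (· ≠ ·) [a, b, c, d, x, y] ∧
    x ∈ extSet p q ∧ y ∈ intSet p q ∧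
    MapsCyc4 (⇑(lamPerm p q x y)) {a, b, c, d} a b c d ∧
    MapsSwap2 (⇑τ) {a, b, c, d, x, y} a b c d ∧
    MapsSwap (⇑τ) {a, b, c, d, x, y} x y

/-- The set `S_ann-nc(p,q)` of `(p,q)`-annular non-crossing permutations. -/
def AnnNC (p q : ℕ) (τ : Equiv.Perm (Fin (p + q))) : Prop :=
  AnnStandard p q τ ∧ ¬ AC1 p q τ ∧ ¬ AC2 p q τ ∧ ¬ AC3 p q τ

/-- A `(p,q)`-connecting set: meets both the external and internal points. -/
def ConnectingBlock (p q : ℕ) (B : Set (Fin (p + q))) : Prop :=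
  (B ∩ extSet p q).Nonempty ∧ (B ∩ intSet p q).Nonempty

/-- `τ` is `(p,q)`-connected: it has a `(p,q)`-connecting orbit. -/
def AnnConnected (p q : ℕ) (τ : Equiv.Perm (Fin (p + q))) : Prop :=
  ∃ A : Set (Fin (p + q)), IsOrbit τ A ∧ ConnectingBlock p q A

/-- A family of blocks has no crossing: no `a < b < c < d` with `a, c` in one block and
`b, d` in a different block. -/
def NoCrossing {n : ℕ} (ρ : Set (Set (Fin n))) : Prop :=
  ¬ ∃ (a b c d : Fin n) (B C : Set (Fin n)), B ∈ ρ ∧ C ∈ ρ ∧ B ≠ C ∧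
      a < b ∧ b < c ∧ c < d ∧ a ∈ B ∧ c ∈ B ∧ b ∈ C ∧ d ∈ C
set_option linter.unusedSectionVars false

section AuxUniq

open Equiv Equiv.Perm List

variable {α : Type*} [Fintype α] [DecidableEq α]

private lemma sameCycle_iterate (τ : Equiv.Perm α) (z : α) (k : ℕ) :
    τ.SameCycle z ((⇑τ)^[k] z) :=
  ⟨(k : ℤ), by rw [zpow_natCast, ← Equiv.Perm.coe_pow]⟩

private lemma sameCycle_exists_iterate {τ : Equiv.Perm α} {z w : α} (h : τ.SameCycle z w) :
    ∃ m : ℕ, (⇑τ)^[m] z = w := by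
  obtain ⟨i, _, _, hi⟩ := h.exists_pow_eq''
  exact ⟨i, by rwa [← Equiv.Perm.coe_pow]⟩

private lemma induced_spec (τ : Equiv.Perm α) (S : Set α) {z : α} (hz : z ∈ S) :
    ∃ k : ℕ, 0 < k ∧ induced (⇑τ) S z = (⇑τ)^[k] z ∧ induced (⇑τ) S z ∈ S ∧
      ∀ j, 0 < j → (⇑τ)^[j] z ∈ S → k ≤ j := by
  classical
  have hex : ∃ k, 0 < k ∧ (⇑τ)^[k] z ∈ S := by
    refine ⟨orderOf τ, orderOf_pos τ, ?_⟩
    rw [← Equiv.Perm.coe_pow, pow_orderOf_eq_one]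
    exact hz
  refine ⟨Nat.find hex, (Nat.find_spec hex).1, ?_, ?_, fun j hj hjS => Nat.find_le ⟨hj, hjS⟩⟩
  · simp only [induced, dif_pos hex]
  · simp only [induced, dif_pos hex]
    exact (Nat.find_spec hex).2

private lemma induced_apply_mem (f : α → α) (S : Set α) {z : α} (h : f z ∈ S) :
    induced f S z = f z := by
  classical
  have hex : ∃ k, 0 < k ∧ f^[k] z ∈ S := ⟨1, one_pos, by simpa using h⟩
  have h1 : Nat.find hex = 1 :=
    le_antisymm (Nat.find_le ⟨one_pos, by simpa using h⟩) (Nat.find_spec hex).1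
  simp only [induced, dif_pos hex, h1, Function.iterate_one]

private lemma iterate_mod_of_fixed {f : α → α} {z : α} {P : ℕ} (hP : f^[P] z = z) (m : ℕ) :
    f^[m] z = f^[m % P] z := by
  conv_lhs => rw [← Nat.mod_add_div m P]
  rw [Function.iterate_add_apply, Function.iterate_mul, Function.iterate_fixed hP (m / P)]

private lemma induced_ne_self (τ : Equiv.Perm α) (S : Set α) {z w : α} (hz : z ∈ S) (hw : w ∈ S)
    (hzw : w ≠ z) (hsc : τ.SameCycle z w) : induced (⇑τ) S z ≠ z := by
  obtain ⟨k, hk, heq, _, hmin⟩ := induced_spec τ S hz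
  intro hfix
  rw [hfix] at heq
  obtain ⟨m, hm⟩ := sameCycle_exists_iterate hsc
  have h1 : (⇑τ)^[m % k] z = w := by rw [← iterate_mod_of_fixed heq.symm]; exact hm
  have h2 : 0 < m % k := by
    rcases Nat.eq_zero_or_pos (m % k) with h | h
    · rw [h] at h1; exact absurd h1 hzw.symm
    · exact h
  have h3 := hmin _ h2 (h1 ▸ hw)
  have h4 : m % k < k := Nat.mod_lt _ hk
  omega

private lemma induced_inj (τ : Equiv.Perm α) (S : Set α) {z w : α} (hz : z ∈ S) (hw : w ∈ S)
    (h : induced (⇑τ) S z = induced (⇑τ) S w) : z = w := by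
  obtain ⟨k₁, hk₁, he₁, _, hmin₁⟩ := induced_spec τ S hz
  obtain ⟨k₂, hk₂, he₂, _, hmin₂⟩ := induced_spec τ S hw
  have key : ∀ (u v : α) (j₁ j₂ : ℕ), u ∈ S → v ∈ S → 0 < j₂ →
      (⇑τ)^[j₁] u = (⇑τ)^[j₂] v → j₂ ≤ j₁ → (∀ j, 0 < j → (⇑τ)^[j] u ∈ S → j₁ ≤ j) → u = v := by
    intro u v j₁ j₂ hu hv hj₂ heq hle hmin
    have h0 : (⇑τ)^[j₂] ((⇑τ)^[j₁ - j₂] u) = (⇑τ)^[j₂] v := by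
      rw [← Function.iterate_add_apply, Nat.add_sub_cancel' hle]; exact heq
    have h3 : (⇑τ)^[j₁ - j₂] u = v := (τ.injective.iterate j₂) h0
    rcases Nat.eq_zero_or_pos (j₁ - j₂) with hne | hpos
    · rw [hne] at h3; exact h3
    · exfalso; have := hmin _ hpos (h3 ▸ hv); omega
  rw [he₁, he₂] at h
  rcases le_total k₂ k₁ with hle | hle
  · exact key z w k₁ k₂ hz hw hk₂ h hle hmin₁
  · exact (key w z k₂ k₁ hw hz hk₁ h.symm hle hmin₂).symm

private lemma first_return_swap (τ : Equiv.Perm α) (S : Set α) {x y : α} (hxy : x ≠ y)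
    (h : S ∩ {w | τ.SameCycle x w} = {x, y}) :
    induced (⇑τ) S x = y ∧ induced (⇑τ) S y = x := by
  have hx' : x ∈ S ∩ {w | τ.SameCycle x w} := by rw [h]; simp
  have hy' : y ∈ S ∩ {w | τ.SameCycle x w} := by rw [h]; simp
  have hxS := hx'.1
  have hyS := hy'.1
  have hsxy : τ.SameCycle x y := hy'.2
  obtain ⟨k₁, _, he₁, hm₁, _⟩ := induced_spec τ S hxS
  obtain ⟨k₂, _, he₂, hm₂, _⟩ := induced_spec τ S hyS
  have hgx : induced (⇑τ) S x ∈ ({x, y} : Set α) := by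
    rw [← h]; exact ⟨hm₁, by rw [he₁]; exact sameCycle_iterate τ x k₁⟩
  have hgy : induced (⇑τ) S y ∈ ({x, y} : Set α) := by
    rw [← h]
    refine ⟨hm₂, ?_⟩
    rw [he₂]
    exact hsxy.trans (sameCycle_iterate τ y k₂)
  constructor
  · rcases hgx with h1 | h1
    · exact absurd h1 (induced_ne_self τ S hxS hyS hxy.symm hsxy)
    · exact h1
  · rcases hgy with h1 | h1
    · exact h1
    · exact absurd h1 (induced_ne_self τ S hyS hxS hxy hsxy.symm)

private lemma first_return_cyc3_of (τ : Equiv.Perm α) (S : Set α) {a u v : α}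
    (hau : a ≠ u) (hav : a ≠ v) (huv : u ≠ v)
    (h : S ∩ {w | τ.SameCycle a w} = {a, u, v})
    (hga : induced (⇑τ) S a = u) :
    induced (⇑τ) S u = v ∧ induced (⇑τ) S v = a := by
  have ha' : a ∈ S ∩ {w | τ.SameCycle a w} := by rw [h]; simp
  have hu' : u ∈ S ∩ {w | τ.SameCycle a w} := by rw [h]; simp
  have hv' : v ∈ S ∩ {w | τ.SameCycle a w} := by rw [h]; simp
  have hgu : induced (⇑τ) S u ∈ ({a, u, v} : Set α) := by
    rw [← h]
    obtain ⟨k, _, he, hm, _⟩ := induced_spec τ S hu'.1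
    exact ⟨hm, by rw [he]; exact hu'.2.trans (sameCycle_iterate τ u k)⟩
  have hgv : induced (⇑τ) S v ∈ ({a, u, v} : Set α) := by
    rw [← h]
    obtain ⟨k, _, he, hm, _⟩ := induced_spec τ S hv'.1
    exact ⟨hm, by rw [he]; exact hv'.2.trans (sameCycle_iterate τ v k)⟩
  have hgune : induced (⇑τ) S u ≠ u :=
    induced_ne_self τ S hu'.1 ha'.1 hau hu'.2.symm
  have hgvne : induced (⇑τ) S v ≠ v :=
    induced_ne_self τ S hv'.1 ha'.1 hav hv'.2.symm
  have hguv : induced (⇑τ) S u = v := by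
    rcases hgu with h1 | h1 | h1
    · exfalso
      rcases hgv with h2 | h2 | h2
      · exact huv (induced_inj τ S hu'.1 hv'.1 (h1.trans h2.symm))
      · exact hav (induced_inj τ S ha'.1 hv'.1 (hga.trans h2.symm))
      · exact hgvne h2
    · exact absurd h1 hgune
    · exact h1
  refine ⟨hguv, ?_⟩
  rcases hgv with h1 | h1 | h1
  · exact h1
  · exact absurd (induced_inj τ S ha'.1 hv'.1 (hga.trans h1.symm)) hav
  · exact absurd h1 hgvne

private lemma first_return_cyc3 (τ : Equiv.Perm α) (S : Set α) {a u v : α}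
    (hau : a ≠ u) (hav : a ≠ v) (huv : u ≠ v)
    (h : S ∩ {w | τ.SameCycle a w} = {a, u, v}) :
    (induced (⇑τ) S a = u ∧ induced (⇑τ) S u = v ∧ induced (⇑τ) S v = a) ∨
      (induced (⇑τ) S a = v ∧ induced (⇑τ) S v = u ∧ induced (⇑τ) S u = a) := by
  have ha' : a ∈ S ∩ {w | τ.SameCycle a w} := by rw [h]; simp
  have hu' : u ∈ S ∩ {w | τ.SameCycle a w} := by rw [h]; simp
  have hga : induced (⇑τ) S a ∈ ({a, u, v} : Set α) := by
    rw [← h]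
    obtain ⟨k, _, he, hm, _⟩ := induced_spec τ S ha'.1
    exact ⟨hm, by rw [he]; exact sameCycle_iterate τ a k⟩
  have hgane : induced (⇑τ) S a ≠ a :=
    induced_ne_self τ S ha'.1 hu'.1 hau.symm hu'.2
  have h' : S ∩ {w | τ.SameCycle a w} = {a, v, u} := by
    rw [h]; ext w
    simp only [Set.mem_insert_iff, Set.mem_singleton_iff]
    tauto
  rcases hga with h1 | h1 | h1
  · exact absurd h1 hgane
  · exact Or.inl ⟨h1, first_return_cyc3_of τ S hau hav huv h h1⟩
  · exact Or.inr ⟨h1, first_return_cyc3_of τ S hav hau huv.symm h' h1⟩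

private lemma orbit_eq_singleton {τ : Equiv.Perm α} {z : α} (h : τ z = z) :
    {w | τ.SameCycle z w} = {z} := by
  ext w
  simp only [Set.mem_setOf_eq, Set.mem_singleton_iff]
  constructor
  · rintro ⟨i, rfl⟩
    exact Equiv.Perm.zpow_apply_eq_self_of_apply_eq_self h i
  · rintro rfl
    exact Equiv.Perm.SameCycle.refl _ _

private lemma orbit_eq_of_sameCycle {τ : Equiv.Perm α} {z w : α} (h : τ.SameCycle z w) :
    {v | τ.SameCycle z v} = {v | τ.SameCycle w v} := by
  ext v
  exact ⟨fun hv => h.symm.trans hv, fun hv => h.trans hv⟩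

private lemma two_le_length_of_two_mem {l : List α} {a b : α} (hab : a ≠ b)
    (ha : a ∈ l) (hb : b ∈ l) : 2 ≤ l.length := by
  rcases l with _ | ⟨u, l⟩
  · simp at ha
  rcases l with _ | ⟨v, l⟩
  · simp at ha hb
    exact absurd (ha.trans hb.symm) hab
  · simp only [List.length_cons]
    omega

end AuxUniq
section AuxList

variable {α : Type*} [DecidableEq α]

private lemma formPerm_powers_spec (l : List α) (hl : l.Nodup) (i : ℕ) (hi : i < l.length)
    (x : α) (hx : l[i] = x) :
    ((List.range (l.length - 1)).map fun k => (l.formPerm ^ (k + 1)) x).Nodup ∧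
      ∀ z, (z ∈ (List.range (l.length - 1)).map fun k => (l.formPerm ^ (k + 1)) x) ↔
        z ∈ l ∧ z ≠ x := by
  subst hx
  have hL : 0 < l.length := Nat.lt_of_le_of_lt (Nat.zero_le i) hi
  have hentry : ∀ k : ℕ, (l.formPerm ^ (k + 1)) l[i] =
      l[(i + (k + 1)) % l.length]'(Nat.mod_lt _ hL) :=
    fun k => List.formPerm_pow_apply_getElem l hl (k + 1) i hi
  have hinj : ∀ m₁ m₂ : ℕ, m₁ < l.length → m₂ < l.length →
      (i + m₁) % l.length = (i + m₂) % l.length → m₁ = m₂ := by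
    intro m₁ m₂ h₁ h₂ h
    have h' : (m₁ + i) % l.length = (m₂ + i) % l.length := by
      rwa [Nat.add_comm m₁ i, Nat.add_comm m₂ i]
    have := Nat.ModEq.add_right_cancel' i h'
    rwa [Nat.ModEq, Nat.mod_eq_of_lt h₁, Nat.mod_eq_of_lt h₂] at this
  constructor
  · refine List.Nodup.map_on ?_ List.nodup_range
    intro k₁ hk₁ k₂ hk₂ heq
    rw [List.mem_range] at hk₁ hk₂
    rw [hentry, hentry] at heq
    have := hinj (k₁ + 1) (k₂ + 1) (by omega) (by omega)
      ((List.Nodup.getElem_inj_iff hl).mp heq)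
    omega
  · intro z
    constructor
    · intro hz
      rw [List.mem_map] at hz
      obtain ⟨k, hk, rfl⟩ := hz
      rw [List.mem_range] at hk
      rw [hentry]
      refine ⟨List.getElem_mem _, ?_⟩
      intro heq
      have hidx : (i + (k + 1)) % l.length = i :=
        (List.Nodup.getElem_inj_iff hl).mp heq
      have hidx' : (i + (k + 1)) % l.length = (i + 0) % l.length := by
        simpa [Nat.mod_eq_of_lt hi] using hidx
      have := hinj (k + 1) 0 (by omega) (by omega) hidx'
      omega
    · rintro ⟨hzl, hzne⟩
      obtain ⟨j, hj, rfl⟩ := List.getElem_of_mem hzl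
      have hji : j ≠ i := by
        intro h
        exact hzne (by simp [h])
      set m : ℕ := if i < j then j - i else j + l.length - i with hm
      have hm1 : 0 < m ∧ m ≤ l.length - 1 := by
        rw [hm]; split <;> omega
      have hmod : (i + m) % l.length = j := by
        rw [hm]; split
        · have h1 : i + (j - i) = j := by omega
          rw [h1, Nat.mod_eq_of_lt hj]
        · have h1 : i + (j + l.length - i) = j + l.length := by omega
          rw [h1, Nat.add_mod_right, Nat.mod_eq_of_lt hj]
      refine List.mem_map.mpr ⟨m - 1, List.mem_range.mpr (by omega), ?_⟩
      rw [hentry]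
      have h2 : m - 1 + 1 = m := by omega
      simp only [h2, hmod]

end AuxList

section AuxLam

private lemma mem_take_finRange {p q : ℕ} (z : Fin (p + q)) :
    z ∈ (List.finRange (p + q)).take p ↔ (z : ℕ) < p := by
  have hlen : ((List.finRange (p + q)).take p).length = p := by
    simp [Nat.min_eq_left (Nat.le_add_right p q)]
  constructor
  · intro hz
    obtain ⟨j, hj, hz'⟩ := List.mem_iff_getElem.mp hz
    rw [hlen] at hj
    have : ((List.finRange (p + q)).take p)[j]'(by rw [hlen]; exact hj) = ⟨j, by omega⟩ := by
      simp
    rw [this] at hz'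
    rw [← hz']
    exact hj
  · intro hz
    refine List.mem_iff_getElem.mpr ⟨(z : ℕ), by rw [hlen]; exact hz, ?_⟩
    simp
private lemma mem_drop_finRange {p q : ℕ} (z : Fin (p + q)) :
    z ∈ (List.finRange (p + q)).drop p ↔ p ≤ (z : ℕ) := by
  have hlen : ((List.finRange (p + q)).drop p).length = q := by simp
  constructor
  · intro hz
    obtain ⟨j, hj, hz'⟩ := List.mem_iff_getElem.mp hz
    rw [hlen] at hj
    have : ((List.finRange (p + q)).drop p)[j]'(by rw [hlen]; exact hj) = ⟨p + j, by omega⟩ := by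
      simp
    rw [this] at hz'
    rw [← hz']
    simp
  · intro hz
    refine List.mem_iff_getElem.mpr ⟨(z : ℕ) - p, by rw [hlen]; omega, ?_⟩
    have hj : p + ((z : ℕ) - p) < p + q := by omega
    have h1 : ((List.finRange (p + q)).drop p)[(z : ℕ) - p]'(by rw [hlen]; omega)
        = ⟨p + ((z : ℕ) - p), hj⟩ := by simp
    rw [h1]
    ext
    simp
    omega

private lemma lam_spec (p q : ℕ) (x y : Fin (p + q)) (hx : (x : ℕ) < p) (hy : p ≤ (y : ℕ)) :
    ∃ L : List (Fin (p + q)), lamPerm p q x y = L.formPerm ∧ L.Nodup ∧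
      ∀ z, z ∈ L ↔ z ≠ x ∧ z ≠ y := by
  classical
  set eL := (List.finRange (p + q)).take p with heL
  set iL := (List.finRange (p + q)).drop p with hiL
  have heLen : eL.length = p := by simp [heL, Nat.min_eq_left (Nat.le_add_right p q)]
  have hiLen : iL.length = q := by simp [hiL]
  have heNd : eL.Nodup := (List.take_sublist _ _).nodup (List.nodup_finRange _)
  have hiNd : iL.Nodup := (List.drop_sublist _ _).nodup (List.nodup_finRange _)
  have hxe : eL[(x : ℕ)]'(by omega) = x := by
    simp [heL]
  have hyi : iL[(y : ℕ) - p]'(by rw [hiLen]; omega) = y := by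
    have : (y : ℕ) < p + q := y.isLt
    simp only [hiL, List.getElem_drop, List.getElem_finRange]
    ext
    simp
    omega
  obtain ⟨hnd₁, hmem₁⟩ := formPerm_powers_spec eL heNd (x : ℕ) (by omega) x hxe
  obtain ⟨hnd₂, hmem₂⟩ := formPerm_powers_spec iL hiNd ((y : ℕ) - p) (by rw [hiLen]; omega) y hyi
  rw [heLen] at hnd₁ hmem₁
  rw [hiLen] at hnd₂ hmem₂
  have hnd₁' : ((List.range (p - 1)).map fun k => (gammaExt p q ^ (k + 1)) x).Nodup := hnd₁
  have hnd₂' : ((List.range (q - 1)).map fun k => (gammaInt p q ^ (k + 1)) y).Nodup := hnd₂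
  have hmem₁' : ∀ z, (z ∈ (List.range (p - 1)).map fun k => (gammaExt p q ^ (k + 1)) x) ↔
      z ∈ eL ∧ z ≠ x := hmem₁
  have hmem₂' : ∀ z, (z ∈ (List.range (q - 1)).map fun k => (gammaInt p q ^ (k + 1)) y) ↔
      z ∈ iL ∧ z ≠ y := hmem₂
  refine ⟨((List.range (p - 1)).map fun k => (gammaExt p q ^ (k + 1)) x) ++
      ((List.range (q - 1)).map fun k => (gammaInt p q ^ (k + 1)) y), rfl, ?_, ?_⟩
  · refine List.Nodup.append hnd₁' hnd₂' ?_
    intro z hz₁ hz₂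
    have h1 := ((hmem₁' z).mp hz₁).1
    have h2 := ((hmem₂' z).mp hz₂).1
    rw [mem_take_finRange] at h1
    rw [mem_drop_finRange] at h2
    omega
  · intro z
    rw [List.mem_append, hmem₁', hmem₂', mem_take_finRange, mem_drop_finRange]
    constructor
    · rintro (⟨h1, h2⟩ | ⟨h1, h2⟩)
      · exact ⟨h2, fun h => by rw [h] at h1; omega⟩
      · exact ⟨fun h => by rw [h] at h1; omega, h2⟩
    · rintro ⟨h1, h2⟩
      rcases Nat.lt_or_ge (z : ℕ) p with h | h
      · exact Or.inl ⟨h, h1⟩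
      · exact Or.inr ⟨h, h2⟩

end AuxLam
section AuxMain

private lemma unique_aux (p q : ℕ) (π : Set (Set (Fin (p + q))))
    (τ₁ τ₂ : Equiv.Perm (Fin (p + q)))
    (hAC1 : ¬ AC2 p q τ₁) (hAC2 : ¬ AC2 p q τ₂)
    (ho1 : {A | IsOrbit τ₁ A} = π) (ho2 : {A | IsOrbit τ₂ A} = π)
    (htwo : ∃ B₁ ∈ π, ∃ B₂ ∈ π, B₁ ≠ B₂ ∧ ConnectingBlock p q B₁ ∧ ConnectingBlock p q B₂) :
    τ₁ = τ₂ := by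
  have horb12 : ∀ w : Fin (p + q), {v | τ₁.SameCycle w v} = {v | τ₂.SameCycle w v} := by
    intro w
    have h1 : IsOrbit τ₂ {v | τ₁.SameCycle w v} := by
      have hmem : {v | τ₁.SameCycle w v} ∈ π := by
        rw [← ho1]; exact ⟨w, rfl⟩
      rw [← ho2] at hmem
      exact hmem
    obtain ⟨a, ha⟩ := h1
    have hw : τ₂.SameCycle a w := by
      have : w ∈ {v | τ₁.SameCycle w v} := Equiv.Perm.SameCycle.refl _ _
      rw [ha] at this
      exact this
    rw [ha, orbit_eq_of_sameCycle hw]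
  apply Equiv.ext
  intro z
  by_cases hz1 : τ₁ z = z
  · have h2 : τ₂ z ∈ {v | τ₂.SameCycle z v} := ⟨1, by simp⟩
    rw [← horb12 z, orbit_eq_singleton hz1] at h2
    rw [hz1]
    exact h2.symm
  by_cases hz2 : τ₂ z = z
  · have h2 : τ₁ z ∈ {v | τ₁.SameCycle z v} := ⟨1, by simp⟩
    rw [horb12 z, orbit_eq_singleton hz2] at h2
    rw [hz2]
    exact h2
  by_cases hbceq : τ₁ z = τ₂ z
  · exact hbceq
  exfalso
  set b := τ₁ z with hb
  set c := τ₂ z with hc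
  set A := {v | τ₁.SameCycle z v} with hA
  have hAπ : A ∈ π := by rw [← ho1]; exact ⟨z, rfl⟩
  have haA : z ∈ A := Equiv.Perm.SameCycle.refl _ _
  have hbA : b ∈ A := ⟨1, by simp [hb]⟩
  have hcA : c ∈ A := by
    rw [hA, horb12]
    exact ⟨1, by simp [hc]⟩
  obtain ⟨B₁, hB₁, B₂, hB₂, hB12, hcon1, hcon2⟩ := htwo
  obtain ⟨B, hBπ, hBA, hBconn⟩ : ∃ B ∈ π, B ≠ A ∧ ConnectingBlock p q B := by
    by_cases h : B₁ = A
    · exact ⟨B₂, hB₂, fun hh => hB12 (h ▸ hh).symm, hcon2⟩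
    · exact ⟨B₁, hB₁, h, hcon1⟩
  obtain ⟨⟨x, hxB, hxext⟩, ⟨y, hyB, hyint⟩⟩ := hBconn
  have hB1 : B = {v | τ₁.SameCycle x v} := by
    have hB : IsOrbit τ₁ B := by rw [← ho1] at hBπ; exact hBπ
    obtain ⟨w, hw⟩ := hB
    have hwx : τ₁.SameCycle w x := by rw [hw] at hxB; exact hxB
    rw [hw, orbit_eq_of_sameCycle hwx]
  have hB2 : B = {v | τ₂.SameCycle x v} := by rw [hB1, horb12]
  have hdisj : ∀ v ∈ A, v ∉ B := by
    intro v hvA hvB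
    apply hBA
    have hxv : τ₁.SameCycle x v := by rw [hB1] at hvB; exact hvB
    rw [hB1, orbit_eq_of_sameCycle hxv, hA]
    exact (orbit_eq_of_sameCycle hvA).symm
  have hxpv : (x : ℕ) < p := hxext
  have hypv : p ≤ (y : ℕ) := hyint
  have hxy : x ≠ y := by
    intro h
    rw [h] at hxpv
    omega
  have hax : z ≠ x := fun h => hdisj z haA (h ▸ hxB)
  have hay : z ≠ y := fun h => hdisj z haA (h ▸ hyB)
  have hbx : b ≠ x := fun h => hdisj b hbA (h ▸ hxB)
  have hby : b ≠ y := fun h => hdisj b hbA (h ▸ hyB)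
  have hcx : c ≠ x := fun h => hdisj c hcA (h ▸ hxB)
  have hcy : c ≠ y := fun h => hdisj c hcA (h ▸ hyB)
  have hab : z ≠ b := fun h => hz1 h.symm
  have hac : z ≠ c := fun h => hz2 h.symm
  have hbc : b ≠ c := hbceq
  -- the lambda permutation
  obtain ⟨L, hLperm, hLnd, hLmem⟩ := lam_spec p q x y hxpv hypv
  have haL : z ∈ L := (hLmem z).mpr ⟨hax, hay⟩
  have hbL : b ∈ L := (hLmem b).mpr ⟨hbx, hby⟩
  have hcL : c ∈ L := (hLmem c).mpr ⟨hcx, hcy⟩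
  have hL2 : 2 ≤ L.length := two_le_length_of_two_mem hab haL hbL
  have hSC : ∀ u v, u ∈ L → v ∈ L → (lamPerm p q x y).SameCycle u v := by
    intro u v hu hv
    rw [hLperm]
    exact (List.isCycle_formPerm hLnd hL2).sameCycle
      ((List.formPerm_apply_mem_ne_self_iff _ hLnd _ hu).mpr hL2)
      ((List.formPerm_apply_mem_ne_self_iff _ hLnd _ hv).mpr hL2)
  have hinterL : ({z, b, c} : Set (Fin (p + q))) ∩ {w | (lamPerm p q x y).SameCycle z w}
      = {z, b, c} := by
    rw [Set.inter_eq_left]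
    intro w hw
    simp only [Set.mem_insert_iff, Set.mem_singleton_iff] at hw
    rcases hw with rfl | rfl | rfl
    · exact Equiv.Perm.SameCycle.refl _ _
    · exact hSC z b haL hbL
    · exact hSC z c haL hcL
  have hlam := first_return_cyc3 (lamPerm p q x y) {z, b, c} hab hac hbc hinterL
  -- orbit intersections for τ₁ and τ₂
  set S : Set (Fin (p + q)) := {z, b, c, x, y} with hS
  have hSA1 : S ∩ {w | τ₁.SameCycle z w} = {z, b, c} := by
    ext w
    simp only [hS, Set.mem_inter_iff, Set.mem_insert_iff, Set.mem_singleton_iff,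
      Set.mem_setOf_eq]
    constructor
    · rintro ⟨(hw | hw | hw | hw | hw), hsc⟩
      · exact Or.inl hw
      · exact Or.inr (Or.inl hw)
      · exact Or.inr (Or.inr hw)
      · refine absurd ?_ (hdisj w hsc)
        rw [hw]; exact hxB
      · refine absurd ?_ (hdisj w hsc)
        rw [hw]; exact hyB
    · rintro (hw | hw | hw)
      · exact ⟨Or.inl hw, by rw [hw]⟩
      · exact ⟨Or.inr (Or.inl hw), by rw [hw]; exact hbA⟩
      · exact ⟨Or.inr (Or.inr (Or.inl hw)), by rw [hw]; exact hcA⟩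
  have hSA2 : S ∩ {w | τ₂.SameCycle z w} = {z, b, c} := by
    rw [← horb12 z]
    exact hSA1
  have hSB1 : S ∩ {w | τ₁.SameCycle x w} = {x, y} := by
    ext w
    simp only [hS, Set.mem_inter_iff, Set.mem_insert_iff, Set.mem_singleton_iff,
      Set.mem_setOf_eq]
    constructor
    · rintro ⟨(hw | hw | hw | hw | hw), hsc⟩
      · refine absurd (show z ∈ B by rw [hB1]; rw [hw] at hsc; exact hsc) (hdisj z haA)
      · refine absurd (show b ∈ B by rw [hB1]; rw [hw] at hsc; exact hsc) (hdisj b hbA)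
      · refine absurd (show c ∈ B by rw [hB1]; rw [hw] at hsc; exact hsc) (hdisj c hcA)
      · exact Or.inl hw
      · exact Or.inr hw
    · rintro (hw | hw)
      · exact ⟨Or.inr (Or.inr (Or.inr (Or.inl hw))), by rw [hw]⟩
      · refine ⟨Or.inr (Or.inr (Or.inr (Or.inr hw))), ?_⟩
        rw [hw]
        have hyB' : y ∈ B := hyB
        rw [hB1] at hyB'
        exact hyB'
  have hSB2 : S ∩ {w | τ₂.SameCycle x w} = {x, y} := by
    rw [← horb12 x]
    exact hSB1
  have hswap1 := first_return_swap τ₁ S hxy hSB1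
  have hswap2 := first_return_swap τ₂ S hxy hSB2
  have hga1 : induced (⇑τ₁) S z = b := induced_apply_mem _ _ (by
    rw [← hb]; exact Or.inr (Or.inl rfl))
  have hga2 : induced (⇑τ₂) S z = c := induced_apply_mem _ _ (by
    rw [← hc]; exact Or.inr (Or.inr (Or.inl rfl)))
  have hcyc1 := first_return_cyc3_of τ₁ S hab hac hbc hSA1 hga1
  have hset3 : ({z, b, c} : Set (Fin (p + q))) = {z, c, b} := by
    rw [Set.pair_comm b c]
  have hSA2' : S ∩ {w | τ₂.SameCycle z w} = {z, c, b} := by rw [hSA2, hset3]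
  have hcyc2 := first_return_cyc3_of τ₂ S hac hab hbc.symm hSA2' hga2
  rcases hlam with hlam | hlam
  · -- lambda order (z, b, c): τ₂ exhibits AC2
    apply hAC2
    refine ⟨z, b, c, x, y, ?_, hxext, hyint, ?_, ?_, ?_⟩
    · simp [List.pairwise_cons, hab, hac, hax, hay, hbc, hbx, hby, hcx, hcy, hxy]
    · exact hlam
    · exact ⟨hga2, hcyc2.1, hcyc2.2⟩
    · exact hswap2
  · -- lambda order (z, c, b): τ₁ exhibits AC2
    apply hAC1
    refine ⟨z, c, b, x, y, ?_, hxext, hyint, ?_, ?_, ?_⟩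
    · simp [List.pairwise_cons, hac, hab, hax, hay, hbc.symm, hcx, hcy, hbx, hby, hxy]
    · show MapsCyc3 _ ({z, c, b} : Set (Fin (p + q))) z c b
      unfold MapsCyc3
      rw [← hset3]
      exact hlam
    · show MapsCyc3 (⇑τ₁) ({z, c, b, x, y} : Set (Fin (p + q))) z b c
      have hset5 : ({z, c, b, x, y} : Set (Fin (p + q))) = S := by
        rw [hS, Set.insert_comm c b]
      unfold MapsCyc3
      rw [hset5]
      exact ⟨hga1, hcyc1.1, hcyc1.2⟩
    · show MapsSwap (⇑τ₁) ({z, c, b, x, y} : Set (Fin (p + q))) x y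
      have hset5 : ({z, c, b, x, y} : Set (Fin (p + q))) = S := by
        rw [hS, Set.insert_comm c b]
      unfold MapsSwap
      rw [hset5]
      exact hswap1

end AuxMain

/-- Proposition 4.4: if `π ∈ NC_ann(p,q)` has at least two `(p,q)`-connecting blocks, then
there exists a unique `τ ∈ S_ann-nc(p,q)` whose partition into orbits equals `π`. -/
theorem stmt_5 (p q : ℕ) (hp : 0 < p) (hq : 0 < q) (π : Set (Set (Fin (p + q))))
    (hpart : Setoid.IsPartition π)
    (hNC : ∃ τ : Equiv.Perm (Fin (p + q)), AnnNC p q τ ∧ {A | IsOrbit τ A} = π)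
    (htwo : ∃ B₁ ∈ π, ∃ B₂ ∈ π, B₁ ≠ B₂ ∧ ConnectingBlock p q B₁ ∧ ConnectingBlock p q B₂) :
    ∃! τ : Equiv.Perm (Fin (p + q)), AnnNC p q τ ∧ {A | IsOrbit τ A} = π := by
  obtain ⟨τ₀, h₀, horb₀⟩ := hNC
  refine ⟨τ₀, ⟨h₀, horb₀⟩, ?_⟩
  rintro τ' ⟨h', horb'⟩
  exact unique_aux p q π τ' τ₀ h'.2.2.1 h₀.2.2.1 horb' horb₀ htwo
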